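/- Let A be a real n×n matrix, B a real n×m matrix, α > 0, and suppose P is a real symmetric positive definite n×n matrix such that P·A + Aᵀ·P − 2·P·B·Bᵀ·P + 2α·P is negative definite. Set F = −Bᵀ·P. Let c > 0 and let s ∈ ℂ satisfy c·Re(s) ≥ 1. Then every eigenvalue μ of the complex n×n matrix A + c·s·B·F (real matrices viewed as complex) satisfies Re(μ) < 0; that is, A + c·s·B·F is Hurwitz. -/

import Mathlib

open Matrix

section Aux
variable {n m : ℕ}

private lemma re_quad (M : Matrix (Fin n) (Fin n) ℝ) (v : Fin n → ℂ) :
    (star v ⬝ᵥ (M.map Complex.ofReal) *ᵥ v).re =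
      (fun i => (v i).re) ⬝ᵥ M *ᵥ (fun i => (v i).re) +
      (fun i => (v i).im) ⬝ᵥ M *ᵥ (fun i => (v i).im) := by
  simp only [dotProduct, mulVec, Complex.re_sum, Finset.mul_sum, map_apply, Pi.star_apply]
  rw [← Finset.sum_add_distrib]
  refine Finset.sum_congr rfl fun j _ => ?_
  rw [← Finset.sum_add_distrib]
  refine Finset.sum_congr rfl fun k _ => ?_
  simp [Complex.mul_re, Complex.mul_im, RCLike.star_def]

private lemma quad_nonneg {M : Matrix (Fin n) (Fin n) ℝ} (hM : M.PosSemidef) (v : Fin n → ℂ) :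
    0 ≤ (star v ⬝ᵥ (M.map Complex.ofReal) *ᵥ v).re := by
  rw [re_quad]
  have h1 := hM.dotProduct_mulVec_nonneg (fun i => (v i).re)
  have h2 := hM.dotProduct_mulVec_nonneg (fun i => (v i).im)
  simp [RCLike.star_def] at h1 h2
  positivity

private lemma quad_pos {M : Matrix (Fin n) (Fin n) ℝ} (hM : M.PosDef) {v : Fin n → ℂ}
    (hv : v ≠ 0) : 0 < (star v ⬝ᵥ (M.map Complex.ofReal) *ᵥ v).re := by
  rw [re_quad]
  have hxy : (fun i => (v i).re) ≠ 0 ∨ (fun i => (v i).im) ≠ 0 := by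
    by_contra h
    push_neg at h
    apply hv
    funext i
    have h1 := congrFun h.1 i
    have h2 := congrFun h.2 i
    simp only [Pi.zero_apply] at h1 h2
    exact Complex.ext h1 h2
  have hsd := hM.posSemidef
  rcases hxy with hx | hy
  · have h1 := hM.dotProduct_mulVec_pos hx
    have h2 := hsd.dotProduct_mulVec_nonneg (fun i => (v i).im)
    simp [RCLike.star_def] at h1 h2
    linarith
  · have h1 := hsd.dotProduct_mulVec_nonneg (fun i => (v i).re)
    have h2 := hM.dotProduct_mulVec_pos hy
    simp [RCLike.star_def] at h1 h2
    linarith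

private lemma mapC_mul {k l o : ℕ} (M : Matrix (Fin k) (Fin l) ℝ) (N : Matrix (Fin l) (Fin o) ℝ) :
    (M * N).map Complex.ofReal = M.map Complex.ofReal * N.map Complex.ofReal := by
  ext i j
  simp [Matrix.mul_apply]

private lemma mapC_add {k l : ℕ} (M N : Matrix (Fin k) (Fin l) ℝ) :
    (M + N).map Complex.ofReal = M.map Complex.ofReal + N.map Complex.ofReal := by
  ext i j; simp

private lemma mapC_smul {k l : ℕ} (r : ℝ) (M : Matrix (Fin k) (Fin l) ℝ) :
    ((r • M).map Complex.ofReal) = (r : ℂ) • M.map Complex.ofReal := by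
  ext i j; simp

private lemma mapC_neg {k l : ℕ} (M : Matrix (Fin k) (Fin l) ℝ) :
    ((-M).map Complex.ofReal) = -(M.map Complex.ofReal) := by
  ext i j; simp

private lemma mapC_ct {k l : ℕ} (M : Matrix (Fin k) (Fin l) ℝ) :
    (M.map Complex.ofReal)ᴴ = Mᵀ.map Complex.ofReal := by
  ext i j
  simp [conjTranspose_apply, Complex.conj_ofReal]

private lemma exists_eigvec {μ : ℂ} {M : Matrix (Fin n) (Fin n) ℂ} (h : μ ∈ spectrum ℂ M) :
    ∃ v, v ≠ 0 ∧ M *ᵥ v = μ • v := by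
  rw [spectrum.mem_iff, Matrix.isUnit_iff_isUnit_det, isUnit_iff_ne_zero, not_not] at h
  obtain ⟨v, hv, hv0⟩ := (Matrix.exists_mulVec_eq_zero_iff).mpr h
  refine ⟨v, hv, ?_⟩
  rw [Matrix.sub_mulVec] at hv0
  have h2 : (algebraMap ℂ (Matrix (Fin n) (Fin n) ℂ) μ) *ᵥ v = μ • v := by
    simp [Algebra.algebraMap_eq_smul_one, Matrix.smul_mulVec]
  rw [h2, sub_eq_zero] at hv0
  exact hv0.symm
end Aux

/-- If `P` is symmetric positive definite with
`P·A + Aᵀ·P − 2·P·B·Bᵀ·P + 2α·P` negative definite (`α > 0`), `F = −Bᵀ·P`, `c > 0` and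
`s ∈ ℂ` satisfies `c·Re(s) ≥ 1`, then `A + c·s·B·F` (over `ℂ`) is Hurwitz: every eigenvalue
has strictly negative real part. -/
theorem stmt5 (n m : ℕ) (hn : 0 < n) (hm : 0 < m)
    (A : Matrix (Fin n) (Fin n) ℝ) (B : Matrix (Fin n) (Fin m) ℝ)
    (α : ℝ) (hα : 0 < α)
    (P : Matrix (Fin n) (Fin n) ℝ) (hP : P.PosDef)
    (hRic : (-(P * A + Aᵀ * P - (2 : ℝ) • (P * B * Bᵀ * P) + (2 * α) • P)).PosDef)
    (F : Matrix (Fin m) (Fin n) ℝ) (hF : F = -(Bᵀ * P))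
    (c : ℝ) (hc : 0 < c) (s : ℂ) (hs : 1 ≤ c * s.re) :
    ∀ μ ∈ spectrum ℂ
        (A.map (Complex.ofReal) + ((c : ℂ) * s) • ((B * F).map Complex.ofReal)),
      μ.re < 0 := by
  intro μ hμ
  -- notation
  set K : Matrix (Fin n) (Fin n) ℝ := P * B * Bᵀ * P with hK
  set Q : Matrix (Fin n) (Fin n) ℝ := P * A + Aᵀ * P - (2 : ℝ) • K + (2 * α) • P with hQ
  set Mc : Matrix (Fin n) (Fin n) ℂ :=
    A.map Complex.ofReal + ((c : ℂ) * s) • ((B * F).map Complex.ofReal) with hMc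
  set Pc : Matrix (Fin n) (Fin n) ℂ := P.map Complex.ofReal with hPc
  -- symmetry of P (over ℝ)
  have hPsym : Pᵀ = P := by
    have hct : Pᴴ = Pᵀ := by ext i j; simp [conjTranspose_apply]
    rw [← hct]; exact hP.1
  -- B * F = -(B * Bᵀ * P)
  have hBF : B * F = -(B * Bᵀ * P) := by
    rw [hF, Matrix.mul_neg, ← Matrix.mul_assoc]
  -- Key matrix identity
  have hkey : Mcᴴ * Pc + Pc * Mc
      = Q.map Complex.ofReal + ((-(2 * α) : ℝ) : ℂ) • Pc
        + (((2 - 2 * (c * s.re)) : ℝ) : ℂ) • (K.map Complex.ofReal) := by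
    have hNT : (B * Bᵀ * P)ᵀ = P * B * Bᵀ := by
      rw [Matrix.transpose_mul, Matrix.transpose_mul, Matrix.transpose_transpose, hPsym,
        ← Matrix.mul_assoc]
    have hMcT : Mcᴴ = Aᵀ.map Complex.ofReal
        - ((c : ℂ) * (starRingEnd ℂ s)) • ((P * B * Bᵀ).map Complex.ofReal) := by
      rw [hMc, conjTranspose_add, conjTranspose_smul, mapC_ct, mapC_ct, hBF]
      have : (-(B * Bᵀ * P))ᵀ = -(P * B * Bᵀ) := by rw [Matrix.transpose_neg, hNT]
      rw [this, mapC_neg, smul_neg, ← sub_eq_add_neg]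
      congr 1
      simp [mul_comm]
    have hMc2 : Mc = A.map Complex.ofReal
        - ((c : ℂ) * s) • ((B * Bᵀ * P).map Complex.ofReal) := by
      rw [hMc, hBF, mapC_neg, smul_neg, ← sub_eq_add_neg]
    rw [hMcT, hMc2, hPc]
    rw [Matrix.sub_mul, Matrix.mul_sub, Matrix.smul_mul, Matrix.mul_smul]
    rw [← mapC_mul Aᵀ P, ← mapC_mul (P * B * Bᵀ) P, ← mapC_mul P A, ← mapC_mul P (B * Bᵀ * P)]
    have e2 : P * (B * Bᵀ * P) = K := by simp [hK, Matrix.mul_assoc]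
    have e1 : P * B * Bᵀ * P = K := rfl
    rw [e1, e2]
    -- real-matrix part
    have hreal : Aᵀ * P + P * A = Q + (-(2 * α)) • P + (2 : ℝ) • K := by
      rw [hQ]; module
    have hrealc : (Aᵀ * P).map Complex.ofReal + (P * A).map Complex.ofReal
        = Q.map Complex.ofReal + ((-(2 * α) : ℝ) : ℂ) • Pc
          + ((2 : ℝ) : ℂ) • K.map Complex.ofReal := by
      have h := congrArg (fun M : Matrix (Fin n) (Fin n) ℝ => M.map Complex.ofReal) hreal
      simpa only [mapC_add, mapC_smul, hPc] using h
    have hcoef : ((c : ℂ) * (starRingEnd ℂ s)) + (c : ℂ) * s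
        = (((2 * (c * s.re)) : ℝ) : ℂ) := by
      have h1 : (c : ℂ) * (starRingEnd ℂ) s = starRingEnd ℂ ((c : ℂ) * s) := by
        simp [_root_.map_mul, Complex.conj_ofReal]
      rw [h1, add_comm, Complex.add_conj, Complex.re_ofReal_mul]
    calc (Aᵀ * P).map Complex.ofReal
          - (↑c * (starRingEnd ℂ) s) • K.map Complex.ofReal
          + ((P * A).map Complex.ofReal - (↑c * s) • K.map Complex.ofReal)
        = ((Aᵀ * P).map Complex.ofReal + (P * A).map Complex.ofReal)
          - (((c : ℂ) * (starRingEnd ℂ s)) + (c : ℂ) * s) • K.map Complex.ofReal := by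
          module
      _ = Q.map Complex.ofReal + ((-(2 * α) : ℝ) : ℂ) • Pc
          + (((2 : ℝ) : ℂ) - (((2 * (c * s.re)) : ℝ) : ℂ)) • K.map Complex.ofReal := by
          rw [hrealc, hcoef]; module
      _ = Q.map Complex.ofReal + ((-(2 * α) : ℝ) : ℂ) • Pc
          + (((2 - 2 * (c * s.re)) : ℝ) : ℂ) • (K.map Complex.ofReal) := by
          push_cast
          module
  -- eigenvector
  obtain ⟨v, hv, heig⟩ := exists_eigvec hμ
  -- the quadratic forms
  set p : ℂ := star v ⬝ᵥ Pc *ᵥ v with hp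
  have hppos : 0 < p.re := quad_pos hP hv
  have hqneg : (star v ⬝ᵥ (Q.map Complex.ofReal) *ᵥ v).re < 0 := by
    have h1 : 0 < (star v ⬝ᵥ ((-Q).map Complex.ofReal) *ᵥ v).re := quad_pos hRic hv
    rw [mapC_neg, Matrix.neg_mulVec, dotProduct_neg] at h1
    simpa using h1
  have hKpsd : K.PosSemidef := by
    have h := Matrix.posSemidef_conjTranspose_mul_self (Bᵀ * P)
    have e : (Bᵀ * P)ᴴ * (Bᵀ * P) = K := by
      have h2 : (Bᵀ * P)ᴴ = P * B := by
        rw [conjTranspose_mul]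
        have hB : (Bᵀ)ᴴ = B := by ext i j; simp [conjTranspose_apply]
        rw [hB, hP.1]
      rw [h2]
      simp [hK, Matrix.mul_assoc]
    rwa [e] at h
  have hknn : 0 ≤ (star v ⬝ᵥ (K.map Complex.ofReal) *ᵥ v).re := quad_nonneg hKpsd v
  -- scalar identity from eigen relation
  have hE : star v ⬝ᵥ (Mcᴴ * Pc + Pc * Mc) *ᵥ v = ((starRingEnd ℂ μ) + μ) * p := by
    rw [Matrix.add_mulVec, dotProduct_add, add_mul]
    congr 1
    · rw [← mulVec_mulVec, dotProduct_mulVec, ← star_mulVec, heig, star_smul,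
        smul_dotProduct]
      rfl
    · rw [← mulVec_mulVec, heig, mulVec_smul, dotProduct_smul]
      rfl
  rw [hkey] at hE
  rw [Matrix.add_mulVec, Matrix.add_mulVec, dotProduct_add, dotProduct_add,
    smul_mulVec, smul_mulVec, dotProduct_smul, dotProduct_smul] at hE
  -- take real parts
  simp only [smul_eq_mul] at hE
  have hre := congrArg Complex.re hE
  rw [Complex.add_re, Complex.add_re, Complex.re_ofReal_mul, Complex.re_ofReal_mul] at hre
  have h2re : (((starRingEnd ℂ μ) + μ) * p).re = 2 * μ.re * p.re := by
    have hcm : (starRingEnd ℂ) μ + μ = ((2 * μ.re : ℝ) : ℂ) := by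
      rw [add_comm, Complex.add_conj]
    rw [hcm, Complex.re_ofReal_mul]
  rw [h2re] at hre
  have hcoefnp : 2 - 2 * (c * s.re) ≤ 0 := by linarith
  nlinarith [mul_nonpos_of_nonpos_of_nonneg hcoefnp hknn]
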